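/- For every formula φ0 of L_DSTIT: if the translation tr(φ0) = p_{φ0} ∧ ⋀_{ψ ∈ sf(φ0)} □B_ψ is satisfiable in BT+AC structures, then φ0 is satisfiable in BT+AC structures. -/
import Mathlib


/-! Common infrastructure for STIT logic (Chellas STIT, deliberative STIT,
historic necessity), following Balbiani, Herzig & Troquard,
"Alternative axiomatics and complexity of deliberative STIT theories". -/

namespace STIT

/-- Formulas of the (combined) STIT language, over a countable set of atoms
(indexed by `ℕ`) and agents indexed by `ℕ` (the actual agent set `Agt` is an
initial segment of `ℕ`).  `cstit i` is the Chellas STIT operator `[i]`,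
`dstit i` is the deliberative STIT operator `[i dstit: ·]`, and `box` is the
historic necessity operator `□`. -/
inductive Fml : Type
  | atm : ℕ → Fml
  | neg : Fml → Fml
  | and : Fml → Fml → Fml
  | cstit : ℕ → Fml → Fml
  | dstit : ℕ → Fml → Fml
  | box : Fml → Fml
  deriving DecidableEq

/-- Material implication `φ → ψ`, as the abbreviation `¬(φ ∧ ¬ψ)`. -/
def impF (φ ψ : Fml) : Fml := .neg (.and φ (.neg ψ))

/-- Disjunction `φ ∨ ψ`, as the abbreviation `¬(¬φ ∧ ¬ψ)`. -/
def orF (φ ψ : Fml) : Fml := .neg (.and (.neg φ) (.neg ψ))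

/-- Biimplication `φ ↔ ψ`, as the abbreviation `(φ → ψ) ∧ (ψ → φ)`. -/
def iffF (φ ψ : Fml) : Fml := .and (impF φ ψ) (impF ψ φ)

/-- `◇φ`, abbreviating `¬□¬φ`. -/
def diaF (φ : Fml) : Fml := .neg (.box (.neg φ))

/-- `⟨i⟩φ`, abbreviating `¬[i]¬φ`. -/
def posF (i : ℕ) (φ : Fml) : Fml := .neg (.cstit i (.neg φ))

/-- Conjunction of a (finite) list of formulas; the empty conjunction is a
tautology `⊤`. -/
def conjF : List Fml → Fml
  | [] => impF (.atm 0) (.atm 0)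
  | [φ] => φ
  | φ :: l => .and φ (conjF l)

/-- The length `‖φ‖` of a formula. -/
def len : Fml → ℕ
  | .atm _ => 1
  | .neg φ => 1 + len φ
  | .and φ ψ => 3 + len φ + len ψ
  | .cstit _ φ => 3 + len φ
  | .dstit _ φ => 5 + len φ
  | .box φ => 1 + len φ

/-- The set `sf φ` of subformulas of `φ`. -/
def sf : Fml → Finset Fml
  | .atm p => {.atm p}
  | .neg φ => insert (.neg φ) (sf φ)
  | .and φ ψ => insert (.and φ ψ) (sf φ ∪ sf ψ)
  | .cstit i φ => insert (.cstit i φ) (sf φ)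
  | .dstit i φ => insert (.dstit i φ) (sf φ)
  | .box φ => insert (.box φ) (sf φ)

/-- The set of atoms occurring in a formula. -/
def atoms : Fml → Finset ℕ
  | .atm p => {p}
  | .neg φ => atoms φ
  | .and φ ψ => atoms φ ∪ atoms ψ
  | .cstit _ φ => atoms φ
  | .dstit _ φ => atoms φ
  | .box φ => atoms φ

/-- `φ` contains no deliberative STIT operator (so `φ` belongs to `L_CSTIT`
when it moreover only uses box/cstit). -/
def NoDstit : Fml → Prop
  | .atm _ => True
  | .neg φ => NoDstit φ
  | .and φ ψ => NoDstit φ ∧ NoDstit ψ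
  | .cstit _ φ => NoDstit φ
  | .dstit _ _ => False
  | .box φ => NoDstit φ

/-- `φ` contains no Chellas STIT operator (so `φ` belongs to `L_DSTIT`). -/
def NoCstit : Fml → Prop
  | .atm _ => True
  | .neg φ => NoCstit φ
  | .and φ ψ => NoCstit φ ∧ NoCstit ψ
  | .cstit _ _ => False
  | .dstit _ φ => NoCstit φ
  | .box φ => NoCstit φ

/-- `φ` contains no historic necessity operator. -/
def NoBox : Fml → Prop
  | .atm _ => True
  | .neg φ => NoBox φ
  | .and φ ψ => NoBox φ ∧ NoBox ψ
  | .cstit _ φ => NoBox φ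
  | .dstit _ φ => NoBox φ
  | .box _ => False

/-- All agents occurring in `φ` belong to `A`. -/
def AgentsIn (A : Set ℕ) : Fml → Prop
  | .atm _ => True
  | .neg φ => AgentsIn A φ
  | .and φ ψ => AgentsIn A φ ∧ AgentsIn A ψ
  | .cstit i φ => i ∈ A ∧ AgentsIn A φ
  | .dstit i φ => i ∈ A ∧ AgentsIn A φ
  | .box φ => AgentsIn A φ

/-- `A` is an initial segment `{0, 1, …}` of `ℕ`. -/
def InitSeg (A : Set ℕ) : Prop := ∀ i ∈ A, ∀ j : ℕ, j ≤ i → j ∈ A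

/-- A BT+AC model over the agent set `Agt`: a nonempty tree-like strict
order of moments, together with a choice function and a valuation.
Histories are represented as maximal chains (maximal linearly `<`-ordered
subsets) of moments; `Choice i w` is, for each agent `i ∈ Agt`, a partition
of the set `H_w` of histories passing through `w` into nonempty cells,
satisfying the superadditivity constraint (independence of agents). -/
structure BTAC (Agt : Set ℕ) where
  W : Type
  neW : Nonempty W
  lt : W → W → Prop
  lt_irrefl : ∀ w : W, ¬ lt w w
  lt_trans : ∀ {a b c : W}, lt a b → lt b c → lt a c
  treelike : ∀ w₁ w₂ w₃ : W, lt w₁ w₃ → lt w₂ w₃ → w₁ = w₂ ∨ lt w₁ w₂ ∨ lt w₂ w₁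
  Choice : ℕ → W → Set (Set (Set W))
  V : ℕ → W → Set W → Prop
  choice_hist : ∀ i ∈ Agt, ∀ w : W, ∀ Q ∈ Choice i w, ∀ h ∈ Q,
      IsMaxChain lt h ∧ w ∈ h
  choice_cell_nonempty : ∀ i ∈ Agt, ∀ w : W, ∀ Q ∈ Choice i w, Q.Nonempty
  choice_nonempty : ∀ i ∈ Agt, ∀ w : W, (Choice i w).Nonempty
  choice_cover : ∀ i ∈ Agt, ∀ w : W, ∀ h : Set W,
      IsMaxChain lt h → w ∈ h → ∃ Q ∈ Choice i w, h ∈ Q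
  choice_disjoint : ∀ i ∈ Agt, ∀ w : W, ∀ Q ∈ Choice i w, ∀ Q' ∈ Choice i w,
      (Q ∩ Q').Nonempty → Q = Q'
  superadd : ∀ w : W, ∀ s : ℕ → Set (Set W),
      (∀ i ∈ Agt, s i ∈ Choice i w) → (⋂ i ∈ Agt, s i).Nonempty

/-- Truth of a formula at an index `w/h` of a BT+AC model.  (`[i]φ` holds at
`w/h` iff `φ` holds at `w/h'` for every history `h'` in the cell of
`Choice i w` containing `h`; `□φ` holds at `w/h` iff `φ` holds at `w/h'` for
every history `h'` through `w`; `[i dstit: φ]` additionally requires a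
witness history through `w` where `φ` fails.) -/
def truth {Agt : Set ℕ} (M : BTAC Agt) : Fml → M.W → Set M.W → Prop
  | .atm p, w, h => M.V p w h
  | .neg φ, w, h => ¬ truth M φ w h
  | .and φ ψ, w, h => truth M φ w h ∧ truth M ψ w h
  | .cstit i φ, w, h =>
      ∀ h' : Set M.W, (∃ Q ∈ M.Choice i w, h ∈ Q ∧ h' ∈ Q) → truth M φ w h'
  | .dstit i φ, w, h =>
      (∀ h' : Set M.W, (∃ Q ∈ M.Choice i w, h ∈ Q ∧ h' ∈ Q) → truth M φ w h') ∧
      (∃ h'' : Set M.W, IsMaxChain M.lt h'' ∧ w ∈ h'' ∧ ¬ truth M φ w h'')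
  | .box φ, w, h =>
      ∀ h' : Set M.W, IsMaxChain M.lt h' → w ∈ h' → truth M φ w h'

/-- Validity in BT+AC structures over the agent set `Agt`: truth at every
index `w/h` (with `h` a history and `w ∈ h`) of every BT+AC model. -/
def validBTAC (Agt : Set ℕ) (φ : Fml) : Prop :=
  ∀ M : BTAC Agt, ∀ w : M.W, ∀ h : Set M.W,
    IsMaxChain M.lt h → w ∈ h → truth M φ w h

/-- Satisfiability in BT+AC structures over the agent set `Agt`. -/
def satBTAC (Agt : Set ℕ) (φ : Fml) : Prop :=
  ∃ M : BTAC Agt, ∃ w : M.W, ∃ h : Set M.W,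
    IsMaxChain M.lt h ∧ w ∈ h ∧ truth M φ w h

/-- A Kripke model over the agent set `Agt`: a nonempty set of worlds, an
equivalence relation `R i` for each agent `i ∈ Agt`, and a valuation. -/
structure KModel (Agt : Set ℕ) where
  W : Type
  neW : Nonempty W
  R : ℕ → W → W → Prop
  equiv : ∀ i ∈ Agt, Equivalence (R i)
  V : ℕ → Set W

/-- The general permutation property: for all worlds `w, v` and agents
`l, m, n ∈ Agt`, if `⟨w,v⟩ ∈ R_l ∘ R_m` then there is `u` with `⟨w,u⟩ ∈ R_n`
and `⟨u,v⟩ ∈ R_i` for every agent `i ≠ n`. -/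
def GenPerm {Agt : Set ℕ} (M : KModel Agt) : Prop :=
  ∀ w v : M.W, ∀ l ∈ Agt, ∀ m ∈ Agt, ∀ n ∈ Agt,
    Relation.Comp (M.R l) (M.R m) w v →
    ∃ u : M.W, M.R n w u ∧ ∀ i ∈ Agt, i ≠ n → M.R i u v

/-- Truth in a Kripke model: `[i]` is interpreted by `R i`, and `□` by the
composition `R 1 ∘ R 0` (so that `Def(□)` holds). -/
def ktruth {Agt : Set ℕ} (M : KModel Agt) : Fml → M.W → Prop
  | .atm p, w => w ∈ M.V p
  | .neg φ, w => ¬ ktruth M φ w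
  | .and φ ψ, w => ktruth M φ w ∧ ktruth M ψ w
  | .cstit i φ, w => ∀ u : M.W, M.R i w u → ktruth M φ u
  | .dstit i φ, w =>
      (∀ u : M.W, M.R i w u → ktruth M φ u) ∧
      (∃ u : M.W, Relation.Comp (M.R 1) (M.R 0) w u ∧ ¬ ktruth M φ u)
  | .box φ, w => ∀ u : M.W, Relation.Comp (M.R 1) (M.R 0) w u → ktruth M φ u

/-- Validity in all Kripke models over `Agt` (with equivalence relations)
satisfying the general permutation property. -/
def validK (Agt : Set ℕ) (φ : Fml) : Prop :=
  ∀ M : KModel Agt, GenPerm M → ∀ w : M.W, ktruth M φ w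

/-- Satisfiability in some Kripke model over `Agt` (with equivalence
relations) satisfying the general permutation property. -/
def satK (Agt : Set ℕ) (φ : Fml) : Prop :=
  ∃ M : KModel Agt, GenPerm M ∧ ∃ w : M.W, ktruth M φ w

/-- `φ` is (a substitution instance of) a propositional tautology: it is true
under every assignment of truth values to formulas that respects `¬` and `∧`. -/
def Taut (φ : Fml) : Prop :=
  ∀ v : Fml → Prop,
    (∀ ψ : Fml, v (.neg ψ) ↔ ¬ v ψ) →
    (∀ ψ χ : Fml, v (.and ψ χ) ↔ (v ψ ∧ v χ)) →
    v φ

/-- The S5 axiom schemas (K, T and 5) for a box-like operator `op`. -/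
def s5Set (op : Fml → Fml) : Set Fml :=
  {χ | (∃ φ ψ : Fml, χ = impF (op (impF φ ψ)) (impF (op φ) (op ψ))) ∨
       (∃ φ : Fml, χ = impF (op φ) φ) ∨
       (∃ φ : Fml, χ = impF (.neg (op (.neg φ))) (op (.neg (op (.neg φ)))))}

/-- The schemas `(Incl_i) : □φ → [i]φ` for each agent `i ∈ Agt`. -/
def inclSet (Agt : Set ℕ) : Set Fml :=
  {χ | ∃ i ∈ Agt, ∃ φ : Fml, χ = impF (.box φ) (.cstit i φ)}

/-- The formula `(AAIA_k) : ◇φ → ⟨k⟩⋀_{0 ≤ i < k}⟨i⟩φ`. -/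
def aaiaFml (k : ℕ) (φ : Fml) : Fml :=
  impF (diaF φ) (posF k (conjF ((List.range k).map (fun i => posF i φ))))

/-- The alternative independence schemas `(AAIA_k)` for all `k ≥ 1` with
agents `0, …, k ∈ Agt`. -/
def aaiaSet (Agt : Set ℕ) : Set Fml :=
  {χ | ∃ k : ℕ, 1 ≤ k ∧ (∀ i ≤ k, i ∈ Agt) ∧ ∃ φ : Fml, χ = aaiaFml k φ}

/-- The formula `(AIA_k) : (◇[0]φ₀ ∧ … ∧ ◇[k]φₖ) → ◇([0]φ₀ ∧ … ∧ [k]φₖ)`. -/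
def aiaFml (k : ℕ) (φs : ℕ → Fml) : Fml :=
  impF (conjF ((List.range (k+1)).map (fun i => diaF (.cstit i (φs i)))))
       (diaF (conjF ((List.range (k+1)).map (fun i => .cstit i (φs i)))))

/-- The formula `(GPerm_k) : ⟨l⟩⟨m⟩φ → ⟨n⟩⋀_{i ≤ k, i ≠ n}⟨i⟩φ`. -/
def gpermFml (k l m n : ℕ) (φ : Fml) : Fml :=
  impF (posF l (posF m φ))
       (posF n (conjF (((List.range (k+1)).filter (fun i => i != n)).map
          (fun i => posF i φ))))

/-- The general permutation schemas `(GPerm_k)` for all `k ≥ 0` (with agents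
`0, …, k ∈ Agt`) and agents `l, m, n ∈ Agt`. -/
def gpermSet (Agt : Set ℕ) : Set Fml :=
  {χ | ∃ k : ℕ, (∀ i ≤ k, i ∈ Agt) ∧
       ∃ l ∈ Agt, ∃ m ∈ Agt, ∃ n ∈ Agt, ∃ φ : Fml, χ = gpermFml k l m n φ}

/-- The definition schema `Def(□) : □φ ↔ [1][0]φ`. -/
def defBoxSet : Set Fml :=
  {χ | ∃ φ : Fml, χ = iffF (.box φ) (.cstit 1 (.cstit 0 φ))}

/-- The alternative axiomatics of Section 3: `S5(□)`, `S5(i)` for each agent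
`i ∈ Agt`, `(Incl_i)` and `(AAIA_k)`. -/
def xuAltAx (Agt : Set ℕ) : Set Fml :=
  s5Set Fml.box ∪ (⋃ i ∈ Agt, s5Set (fun φ => Fml.cstit i φ)) ∪
    inclSet Agt ∪ aaiaSet Agt

/-- The axiomatics of Section 4: `S5(i)` for each agent `i ∈ Agt`, `Def(□)`
and `(GPerm_k)`. -/
def gpermAx (Agt : Set ℕ) : Set Fml :=
  (⋃ i ∈ Agt, s5Set (fun φ => Fml.cstit i φ)) ∪ defBoxSet ∪ gpermSet Agt

/-- Hilbert-style provability from the axiom set `Ax` (together with all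
propositional tautologies) by modus ponens and `□`-necessitation. -/
inductive ProvB (Ax : Set Fml) : Fml → Prop
  | taut {φ : Fml} : Taut φ → ProvB Ax φ
  | axm {φ : Fml} : φ ∈ Ax → ProvB Ax φ
  | mp {φ ψ : Fml} : ProvB Ax (impF φ ψ) → ProvB Ax φ → ProvB Ax ψ
  | nec {φ : Fml} : ProvB Ax φ → ProvB Ax (.box φ)

/-- Hilbert-style provability from the axiom set `Ax` (together with all
propositional tautologies) by modus ponens and `[i]`-necessitation for each
agent `i ∈ Agt`. -/
inductive ProvC (Agt : Set ℕ) (Ax : Set Fml) : Fml → Prop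
  | taut {φ : Fml} : Taut φ → ProvC Agt Ax φ
  | axm {φ : Fml} : φ ∈ Ax → ProvC Agt Ax φ
  | mp {φ ψ : Fml} : ProvC Agt Ax (impF φ ψ) → ProvC Agt Ax φ → ProvC Agt Ax ψ
  | nec {i : ℕ} {φ : Fml} : i ∈ Agt → ProvC Agt Ax φ → ProvC Agt Ax (.cstit i φ)

/-- The biimplication `B_ψ` relating the fresh atom `p_ψ` (given by `pA ψ`)
with `ψ`, used in the translation `tr` from `L_DSTIT` to `L_CSTIT`:
`B_{[i dstit: φ]} = (p_{[i dstit: φ]} ↔ [i]p_φ ∧ ¬□p_φ)`. -/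
def Beq (pA : Fml → ℕ) : Fml → Fml
  | .atm q => iffF (.atm (pA (.atm q))) (.atm q)
  | .neg φ => iffF (.atm (pA (.neg φ))) (.neg (.atm (pA φ)))
  | .and φ ψ => iffF (.atm (pA (.and φ ψ))) (.and (.atm (pA φ)) (.atm (pA ψ)))
  | .cstit i φ => iffF (.atm (pA (.cstit i φ))) (.cstit i (.atm (pA φ)))
  | .dstit i φ => iffF (.atm (pA (.dstit i φ)))
      (.and (.cstit i (.atm (pA φ))) (.neg (.box (.atm (pA φ)))))
  | .box φ => iffF (.atm (pA (.box φ))) (.box (.atm (pA φ)))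

/-- The biimplication `B'_ψ` used in the translation `tr'` from `L_CSTIT` to
`L_DSTIT`: `B'_{[i]φ} = (p_{[i]φ} ↔ [i dstit: p_φ] ∨ □p_φ)`. -/
def Beq' (pA : Fml → ℕ) : Fml → Fml
  | .atm q => iffF (.atm (pA (.atm q))) (.atm q)
  | .neg φ => iffF (.atm (pA (.neg φ))) (.neg (.atm (pA φ)))
  | .and φ ψ => iffF (.atm (pA (.and φ ψ))) (.and (.atm (pA φ)) (.atm (pA ψ)))
  | .cstit i φ => iffF (.atm (pA (.cstit i φ)))
      (orF (.dstit i (.atm (pA φ))) (.box (.atm (pA φ))))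
  | .dstit i φ => iffF (.atm (pA (.dstit i φ))) (.dstit i (.atm (pA φ)))
  | .box φ => iffF (.atm (pA (.box φ))) (.box (.atm (pA φ)))

/-- The translation `tr(φ₀) = p_{φ₀} ∧ ⋀_{ψ ∈ sf(φ₀)} □B_ψ`. -/
noncomputable def tr (pA : Fml → ℕ) (φ0 : Fml) : Fml :=
  .and (.atm (pA φ0)) (conjF ((sf φ0).toList.map (fun ψ => .box (Beq pA ψ))))

/-- The translation `tr'(φ₀) = p_{φ₀} ∧ ⋀_{ψ ∈ sf(φ₀)} □B'_ψ`. -/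
noncomputable def tr' (pA : Fml → ℕ) (φ0 : Fml) : Fml :=
  .and (.atm (pA φ0)) (conjF ((sf φ0).toList.map (fun ψ => .box (Beq' pA ψ))))

/-- The atoms `p_ψ = pA ψ` for `ψ ∈ sf φ₀` are pairwise distinct and fresh
(none occurs in `φ₀`). -/
def Fresh (pA : Fml → ℕ) (φ0 : Fml) : Prop :=
  Set.InjOn pA ↑(sf φ0) ∧ ∀ ψ ∈ sf φ0, pA ψ ∉ atoms φ0


lemma sf_self (φ : Fml) : φ ∈ sf φ := by
  cases φ <;> simp [sf]

lemma sf_trans : ∀ {φ χ ψ : Fml}, χ ∈ sf ψ → ψ ∈ sf φ → χ ∈ sf φ := by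
  intro φ
  induction φ with
  | atm p =>
    intro χ ψ h1 h2
    simp [sf] at h2; subst h2; simpa [sf] using h1
  | neg φ ih =>
    intro χ ψ h1 h2
    simp [sf] at h2 ⊢
    rcases h2 with rfl | h2
    · simpa [sf] using h1
    · exact Or.inr (ih h1 h2)
  | and φ φ' ih ih' =>
    intro χ ψ h1 h2
    simp [sf] at h2 ⊢
    rcases h2 with rfl | h2 | h2
    · simpa [sf] using h1
    · exact Or.inr (Or.inl (ih h1 h2))
    · exact Or.inr (Or.inr (ih' h1 h2))
  | cstit i φ ih =>
    intro χ ψ h1 h2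
    simp [sf] at h2 ⊢
    rcases h2 with rfl | h2
    · simpa [sf] using h1
    · exact Or.inr (ih h1 h2)
  | dstit i φ ih =>
    intro χ ψ h1 h2
    simp [sf] at h2 ⊢
    rcases h2 with rfl | h2
    · simpa [sf] using h1
    · exact Or.inr (ih h1 h2)
  | box φ ih =>
    intro χ ψ h1 h2
    simp [sf] at h2 ⊢
    rcases h2 with rfl | h2
    · simpa [sf] using h1
    · exact Or.inr (ih h1 h2)

lemma agentsIn_of_mem_sf {A : Set ℕ} :
    ∀ {φ ψ : Fml}, ψ ∈ sf φ → AgentsIn A φ → AgentsIn A ψ := by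
  intro φ
  induction φ with
  | atm p =>
    intro ψ h1 h2; simp [sf] at h1; subst h1; exact h2
  | neg φ ih =>
    intro ψ h1 h2
    simp [sf] at h1
    rcases h1 with rfl | h1
    · exact h2
    · exact ih h1 h2
  | and φ φ' ih ih' =>
    intro ψ h1 h2
    simp [sf] at h1
    rcases h1 with rfl | h1 | h1
    · exact h2
    · exact ih h1 h2.1
    · exact ih' h1 h2.2
  | cstit i φ ih =>
    intro ψ h1 h2
    simp [sf] at h1
    rcases h1 with rfl | h1
    · exact h2
    · exact ih h1 h2.2
  | dstit i φ ih =>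
    intro ψ h1 h2
    simp [sf] at h1
    rcases h1 with rfl | h1
    · exact h2
    · exact ih h1 h2.2
  | box φ ih =>
    intro ψ h1 h2
    simp [sf] at h1
    rcases h1 with rfl | h1
    · exact h2
    · exact ih h1 h2

lemma truth_conjF {Agt : Set ℕ} (M : BTAC Agt) (l : List Fml) (w : M.W) (h : Set M.W) :
    truth M (conjF l) w h ↔ ∀ χ ∈ l, truth M χ w h := by
  induction l with
  | nil => simp [conjF, impF, truth]
  | cons a l ih =>
    cases l with
    | nil => simp [conjF]
    | cons b l' =>
      simp only [conjF, truth, List.mem_cons] at ih ⊢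
      constructor
      · rintro ⟨ha, hr⟩ χ hχ
        rcases hχ with rfl | hχ
        · exact ha
        · exact ih.1 hr χ hχ
      · intro H
        exact ⟨H a (Or.inl rfl), ih.2 fun χ hχ => H χ (Or.inr hχ)⟩

lemma truth_iffF {Agt : Set ℕ} (M : BTAC Agt) (a b : Fml) (w : M.W) (h : Set M.W) :
    truth M (iffF a b) w h ↔ (truth M a w h ↔ truth M b w h) := by
  simp only [iffF, impF, truth]
  tauto

/-- For every formula `φ₀` of `L_DSTIT`: if the translation
`tr(φ₀) = p_{φ₀} ∧ ⋀_{ψ ∈ sf(φ₀)} □B_ψ` is satisfiable in BT+AC structures,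
then `φ₀` is satisfiable in BT+AC structures. -/
theorem tr_sat_implies_dstit_sat (Agt : Set ℕ) (hAgt : InitSeg Agt)
    (φ0 : Fml) (hφ0 : NoCstit φ0) (hφ0A : AgentsIn Agt φ0)
    (pA : Fml → ℕ) (hfresh : Fresh pA φ0)
    (hsat : satBTAC Agt (tr pA φ0)) :
    satBTAC Agt φ0 := by
  obtain ⟨M, w, h, hmax, hwh, htr⟩ := hsat
  have htr1 : truth M (.atm (pA φ0)) w h := htr.1
  have htr2 : truth M (conjF ((sf φ0).toList.map (fun ψ => .box (Beq pA ψ)))) w h := htr.2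
  have hB : ∀ ψ ∈ sf φ0, ∀ h' : Set M.W, IsMaxChain M.lt h' → w ∈ h' →
      truth M (Beq pA ψ) w h' := by
    intro ψ hψ h' hm hw
    have hmem : (Fml.box (Beq pA ψ)) ∈ (sf φ0).toList.map (fun ψ => Fml.box (Beq pA ψ)) := by
      simp only [List.mem_map, Finset.mem_toList]
      exact ⟨ψ, hψ, rfl⟩
    have hb : truth M (.box (Beq pA ψ)) w h := (truth_conjF M _ w h).1 htr2 _ hmem
    exact hb h' hm hw
  have main : ∀ ψ : Fml, ψ ∈ sf φ0 → AgentsIn Agt ψ →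
      ∀ h' : Set M.W, IsMaxChain M.lt h' → w ∈ h' →
      (truth M (.atm (pA ψ)) w h' ↔ truth M ψ w h') := by
    intro ψ
    induction ψ with
    | atm q =>
      intro hmem _ h' hm hw
      exact (truth_iffF M _ _ w h').1 (hB _ hmem h' hm hw)
    | neg φ ih =>
      intro hmem hag h' hm hw
      have hφmem : φ ∈ sf φ0 := sf_trans (by simp [sf, sf_self]) hmem
      have hb : truth M (.atm (pA (.neg φ))) w h' ↔ truth M (.neg (.atm (pA φ))) w h' :=
        (truth_iffF M _ _ w h').1 (hB _ hmem h' hm hw)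
      rw [hb]
      show ¬ truth M (.atm (pA φ)) w h' ↔ ¬ truth M φ w h'
      exact not_congr (ih hφmem hag h' hm hw)
    | and φ φ' ih ih' =>
      intro hmem hag h' hm hw
      have hφmem : φ ∈ sf φ0 := sf_trans (by simp [sf, sf_self]) hmem
      have hφ'mem : φ' ∈ sf φ0 := sf_trans (by simp [sf, sf_self]) hmem
      have hb : truth M (.atm (pA (.and φ φ'))) w h' ↔
          truth M (.and (.atm (pA φ)) (.atm (pA φ'))) w h' :=
        (truth_iffF M _ _ w h').1 (hB _ hmem h' hm hw)
      rw [hb]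
      show (truth M (.atm (pA φ)) w h' ∧ truth M (.atm (pA φ')) w h') ↔ _
      exact and_congr (ih hφmem hag.1 h' hm hw) (ih' hφ'mem hag.2 h' hm hw)
    | cstit i φ ih =>
      intro hmem hag h' hm hw
      have hφmem : φ ∈ sf φ0 := sf_trans (by simp [sf, sf_self]) hmem
      have hb : truth M (.atm (pA (.cstit i φ))) w h' ↔
          truth M (.cstit i (.atm (pA φ))) w h' :=
        (truth_iffF M _ _ w h').1 (hB _ hmem h' hm hw)
      rw [hb]
      show (∀ h'' : Set M.W, (∃ Q ∈ M.Choice i w, h' ∈ Q ∧ h'' ∈ Q) →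
          truth M (.atm (pA φ)) w h'') ↔ _
      constructor
      · intro H h'' hex
        obtain ⟨Q, hQ, h1, h2⟩ := hex
        have hh := M.choice_hist i hag.1 w Q hQ h'' h2
        exact (ih hφmem hag.2 h'' hh.1 hh.2).1 (H h'' ⟨Q, hQ, h1, h2⟩)
      · intro H h'' hex
        obtain ⟨Q, hQ, h1, h2⟩ := hex
        have hh := M.choice_hist i hag.1 w Q hQ h'' h2
        exact (ih hφmem hag.2 h'' hh.1 hh.2).2 (H h'' ⟨Q, hQ, h1, h2⟩)
    | dstit i φ ih =>
      intro hmem hag h' hm hw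
      have hφmem : φ ∈ sf φ0 := sf_trans (by simp [sf, sf_self]) hmem
      have hb : truth M (.atm (pA (.dstit i φ))) w h' ↔
          truth M (.and (.cstit i (.atm (pA φ))) (.neg (.box (.atm (pA φ))))) w h' :=
        (truth_iffF M _ _ w h').1 (hB _ hmem h' hm hw)
      rw [hb]
      show ((∀ h'' : Set M.W, (∃ Q ∈ M.Choice i w, h' ∈ Q ∧ h'' ∈ Q) →
          truth M (.atm (pA φ)) w h'') ∧
          ¬ (∀ h'' : Set M.W, IsMaxChain M.lt h'' → w ∈ h'' →
            truth M (.atm (pA φ)) w h'')) ↔ _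
      show _ ↔ ((∀ h'' : Set M.W, (∃ Q ∈ M.Choice i w, h' ∈ Q ∧ h'' ∈ Q) →
          truth M φ w h'') ∧
          (∃ h'' : Set M.W, IsMaxChain M.lt h'' ∧ w ∈ h'' ∧ ¬ truth M φ w h''))
      constructor
      · rintro ⟨H1, H2⟩
        refine ⟨fun h'' hex => ?_, ?_⟩
        · obtain ⟨Q, hQ, h1, h2⟩ := hex
          have hh := M.choice_hist i hag.1 w Q hQ h'' h2
          exact (ih hφmem hag.2 h'' hh.1 hh.2).1 (H1 h'' ⟨Q, hQ, h1, h2⟩)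
        · push_neg at H2
          obtain ⟨h'', hm'', hw'', hnp⟩ := H2
          exact ⟨h'', hm'', hw'', fun hf =>
            hnp ((ih hφmem hag.2 h'' hm'' hw'').2 hf)⟩
      · rintro ⟨H1, h'', hm'', hw'', hnφ⟩
        refine ⟨fun h''' hex => ?_, ?_⟩
        · obtain ⟨Q, hQ, h1, h2⟩ := hex
          have hh := M.choice_hist i hag.1 w Q hQ h''' h2
          exact (ih hφmem hag.2 h''' hh.1 hh.2).2 (H1 h''' ⟨Q, hQ, h1, h2⟩)
        · intro Hall
          exact hnφ ((ih hφmem hag.2 h'' hm'' hw'').1 (Hall h'' hm'' hw''))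
    | box φ ih =>
      intro hmem hag h' hm hw
      have hφmem : φ ∈ sf φ0 := sf_trans (by simp [sf, sf_self]) hmem
      have hb : truth M (.atm (pA (.box φ))) w h' ↔
          truth M (.box (.atm (pA φ))) w h' :=
        (truth_iffF M _ _ w h').1 (hB _ hmem h' hm hw)
      rw [hb]
      show (∀ h'' : Set M.W, IsMaxChain M.lt h'' → w ∈ h'' →
          truth M (.atm (pA φ)) w h'') ↔ _
      constructor
      · intro H h'' hm'' hw''
        exact (ih hφmem hag h'' hm'' hw'').1 (H h'' hm'' hw'')
      · intro H h'' hm'' hw''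
        exact (ih hφmem hag h'' hm'' hw'').2 (H h'' hm'' hw'')
  exact ⟨M, w, h, hmax, hwh, (main φ0 (sf_self φ0) hφ0A h hmax hwh).1 htr1⟩

end STIT
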